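/- (Corollary to Theorem 2.3, q-case: covariance for the q-trinomial distribution of the second kind.) Let n ≥ 1 be a natural number and β₁, β₂ ∈ (0,1). Define E₁ := ∑_{x₁+x₂≤n} [x₁]_q·u(x₁,x₂) (sum over all pairs of natural numbers with x₁+x₂ ≤ n), E₂ := ∑_{x₂=1}^{n} ∑_{x₁=0}^{n−x₂} [x₂]_q·u(x₁,x₂)/(1 − β₁·q^{n−1−x₁}), and E₁₂ := ∑_{x₂=1}^{n} ∑_{x₁=0}^{n−x₂} [x₁]_q·[x₂]_q·u(x₁,x₂)/(1 − β₁·q^{n−1−x₁}). Then E₁₂ − E₁·E₂ = [n]_q · β₁ · β₂ · ([n−1]_q − [n]_q). -/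

import Mathlib

open Finset

/-- q-integer `[k]_q = (1 - q^k)/(1 - q)`. -/
noncomputable def qInt (q : ℝ) (k : ℤ) : ℝ := (1 - q ^ k) / (1 - q)

/-- q-factorial `[n]_q! = ∏_{i=1}^n [i]_q`. -/
noncomputable def qFact (q : ℝ) (n : ℕ) : ℝ := ∏ i ∈ Finset.Icc 1 n, qInt q (i : ℤ)

/-- q-binomial coefficient `C_q(n,k)`. -/
noncomputable def qBinom (q : ℝ) (n k : ℕ) : ℝ := qFact q n / (qFact q k * qFact q (n - k))

/-- q-falling factorial `[u]_{m,q} = ∏_{i=1}^m [u-i+1]_q`. -/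
noncomputable def qFall (q : ℝ) (u : ℤ) (m : ℕ) : ℝ := ∏ i ∈ Finset.Icc 1 m, qInt q (u - (i : ℤ) + 1)

/-- `[k]_{q⁻¹} = q^{1-k} · [k]_q`. -/
noncomputable def qIntInv (q : ℝ) (k : ℤ) : ℝ := q ^ (1 - k) * qInt q k

/-- `[u]_{m,q⁻¹} = ∏_{i=1}^m [u-i+1]_{q⁻¹}`. -/
noncomputable def qFallInv (q : ℝ) (u : ℤ) (m : ℕ) : ℝ := ∏ i ∈ Finset.Icc 1 m, qIntInv q (u - (i : ℤ) + 1)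

/-- `b(k) = k(k-1)/2`. -/
def bb (k : ℕ) : ℕ := k * (k - 1) / 2

/-- `⟨1 ⊕ α⟩_m = ∏_{i=1}^m (1 + α q^{i-1})`. -/
noncomputable def oplus (q α : ℝ) (m : ℕ) : ℝ := ∏ i ∈ Finset.Icc 1 m, (1 + α * q ^ (i - 1))

/-- `⟨1 ⊖ β⟩_m = ∏_{i=1}^m (1 - β q^{i-1})`. -/
noncomputable def ominus (q β : ℝ) (m : ℕ) : ℝ := ∏ i ∈ Finset.Icc 1 m, (1 - β * q ^ (i - 1))

/-- q-trinomial coefficient `T_q(n; x₁, x₂)`. -/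
noncomputable def qTri (q : ℝ) (n x1 x2 : ℕ) : ℝ :=
  qFact q n / (qFact q x1 * qFact q x2 * qFact q (n - x1 - x2))

/-- pmf of the q-trinomial distribution of the second kind. -/
noncomputable def upmf (q b1 b2 : ℝ) (n x1 x2 : ℕ) : ℝ :=
  qTri q n x1 x2 * b1 ^ x1 * b2 ^ x2 * ominus q b1 (n - x1) * ominus q b2 (n - x1 - x2)

section
variable {q : ℝ} (hq0 : 0 < q) (hq1 : q < 1)

lemma qIntN (k : ℕ) : qInt q (k : ℤ) = (1 - q ^ k) / (1 - q) := by
  simp [qInt, zpow_natCast]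

include hq0 hq1

lemma qInt_pos {k : ℕ} (hk : 1 ≤ k) : 0 < qInt q (k : ℤ) := by
  rw [qIntN]
  have h1 : q ^ k < 1 := pow_lt_one₀ hq0.le hq1 (by omega)
  exact div_pos (by linarith) (by linarith)

lemma qFact_pos (n : ℕ) : 0 < qFact q n := by
  unfold qFact
  refine Finset.prod_pos fun i hi => qInt_pos hq0 hq1 (mem_Icc.mp hi).1

lemma qFact_ne (n : ℕ) : qFact q n ≠ 0 := (qFact_pos hq0 hq1 n).ne'

omit hq0 hq1

lemma qFact_zero : qFact q 0 = 1 := by simp [qFact]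

lemma qFact_succ (n : ℕ) : qFact q (n + 1) = qFact q n * ((1 - q ^ (n + 1)) / (1 - q)) := by
  unfold qFact
  rw [Finset.prod_Icc_succ_top (by omega), qIntN]

lemma ominus_succ (β : ℝ) (m : ℕ) : ominus q β (m + 1) = ominus q β m * (1 - β * q ^ m) := by
  unfold ominus
  rw [Finset.prod_Icc_succ_top (by omega)]
  simp

lemma ominus_zero (β : ℝ) : ominus q β 0 = 1 := by simp [ominus]

include hq0 hq1

lemma qIntN_ne {k : ℕ} (hk : 1 ≤ k) : (1 : ℝ) - q ^ k ≠ 0 := by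
  have h1 : q ^ k < 1 := pow_lt_one₀ hq0.le hq1 (by omega)
  linarith

lemma qBinom_zero (m : ℕ) : qBinom q m 0 = 1 := by
  unfold qBinom
  rw [qFact_zero, Nat.sub_zero, one_mul, div_self (qFact_ne hq0 hq1 m)]

lemma qBinom_self (m : ℕ) : qBinom q m m = 1 := by
  unfold qBinom
  rw [Nat.sub_self, qFact_zero, mul_one, div_self (qFact_ne hq0 hq1 m)]

lemma pascal (i j : ℕ) :
    qBinom q (i + j + 2) (i + 1)
      = qBinom q (i + j + 1) (i + 1) + q ^ (j + 1) * qBinom q (i + j + 1) i := by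
  have h1 : i + j + 2 - (i + 1) = j + 1 := by omega
  have h2 : i + j + 1 - (i + 1) = j := by omega
  have h3 : i + j + 1 - i = j + 1 := by omega
  unfold qBinom
  rw [h1, h2, h3]
  rw [show i + j + 2 = (i + j + 1) + 1 by ring, qFact_succ, qFact_succ i, qFact_succ j]
  have hfi := qFact_ne hq0 hq1 i
  have hfj := qFact_ne hq0 hq1 j
  have hfij := qFact_ne hq0 hq1 (i + j + 1)
  have hq : (1:ℝ) - q ≠ 0 := by linarith
  have gi := qIntN_ne hq0 hq1 (k := i + 1) (by omega)
  have gj := qIntN_ne hq0 hq1 (k := j + 1) (by omega)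
  field_simp
  ring

lemma sumA (β : ℝ) (m : ℕ) :
    ∑ k ∈ range (m + 1), qBinom q m k * β ^ k * ominus q β (m - k) = 1 := by
  induction m with
  | zero => simp [qBinom_self hq0 hq1, ominus_zero]
  | succ m ih =>
    rw [Finset.sum_range_succ]
    have hl : qBinom q (m + 1) (m + 1) * β ^ (m + 1) * ominus q β (m + 1 - (m + 1))
        = β ^ (m + 1) := by
      rw [qBinom_self hq0 hq1, Nat.sub_self, ominus_zero]; ring
    rw [hl]
    have hsplit : ∀ k ∈ range (m + 1),
        qBinom q (m + 1) k * β ^ k * ominus q β (m + 1 - k)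
          = (qBinom q m k * β ^ k * ominus q β (m - k)
              - β * (qBinom q m k * β ^ k * q ^ (m - k) * ominus q β (m - k)))
            + (if 1 ≤ k then q ^ (m + 1 - k) * qBinom q m (k - 1) * β ^ k * ominus q β (m + 1 - k) else 0) := by
      intro k hk
      rw [mem_range] at hk
      rcases Nat.eq_zero_or_pos k with rfl | hk1
      · rw [if_neg (by omega : ¬ (1:ℕ) ≤ 0), Nat.sub_zero, Nat.sub_zero,
          qBinom_zero hq0 hq1, qBinom_zero hq0 hq1, ominus_succ]
        ring
      · obtain ⟨i, rfl⟩ : ∃ i, k = i + 1 := ⟨k - 1, by omega⟩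
        obtain ⟨j, rfl⟩ : ∃ j, m = i + 1 + j := ⟨m - i - 1, by omega⟩
        rw [if_pos (by omega)]
        have hp := pascal hq0 hq1 i j
        have e1 : i + 1 + j + 1 = i + j + 2 := by ring
        have e2 : i + j + 2 - (i + 1) = j + 1 := by omega
        have e3 : i + 1 + j - (i + 1) = j := by omega
        have e4 : i + 1 - 1 = i := by omega
        rw [e1, e2, e3, e4, show i + 1 + j = i + j + 1 by ring, hp, ominus_succ]
        ring
    rw [Finset.sum_congr rfl hsplit, Finset.sum_add_distrib, Finset.sum_sub_distrib, ih,
      ← Finset.mul_sum]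
    have hshift : ∑ k ∈ range (m + 1),
        (if 1 ≤ k then q ^ (m + 1 - k) * qBinom q m (k - 1) * β ^ k * ominus q β (m + 1 - k) else 0)
        = ∑ i ∈ range m, q ^ (m - i) * qBinom q m i * β ^ (i + 1) * ominus q β (m - i) := by
      rw [Finset.sum_range_succ']
      simp only [if_neg (by omega : ¬ (1:ℕ) ≤ 0), add_zero]
      refine Finset.sum_congr rfl fun i hi => ?_
      rw [if_pos (by omega)]
      have : m + 1 - (i + 1) = m - i := by omega
      rw [this, Nat.add_sub_cancel]
    rw [hshift]
    rw [add_assoc]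
    have : (∑ i ∈ range m, q ^ (m - i) * qBinom q m i * β ^ (i + 1) * ominus q β (m - i))
        + β ^ (m + 1)
        = β * ∑ k ∈ range (m + 1), qBinom q m k * β ^ k * q ^ (m - k) * ominus q β (m - k) := by
      rw [Finset.mul_sum, Finset.sum_range_succ]
      congr 1
      · exact Finset.sum_congr rfl fun i _ => by ring
      · rw [Nat.sub_self, qBinom_self hq0 hq1, ominus_zero]; ring
    rw [this]
    ring

lemma absorb (i j : ℕ) :
    qInt q ((i : ℤ) + 1) * qBinom q (i + j + 1) (i + 1)
      = qInt q ((i : ℤ) + (j : ℤ) + 1) * qBinom q (i + j) i := by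
  have h1 : i + j + 1 - (i + 1) = j := by omega
  have h2 : i + j - i = j := by omega
  unfold qBinom
  rw [h1, h2, show i + j + 1 = (i + j) + 1 by rfl, qFact_succ, qFact_succ i]
  have e1 : qInt q ((i:ℤ) + 1) = (1 - q ^ (i+1)) / (1 - q) := by
    rw [show (i:ℤ) + 1 = ((i+1 : ℕ) : ℤ) by push_cast; ring, qIntN]
  have e2 : qInt q ((i:ℤ) + (j:ℤ) + 1) = (1 - q ^ (i+j+1)) / (1 - q) := by
    rw [show (i:ℤ) + (j:ℤ) + 1 = ((i+j+1 : ℕ) : ℤ) by push_cast; ring, qIntN]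
  rw [e1, e2]
  have hfi := qFact_ne hq0 hq1 i
  have hfj := qFact_ne hq0 hq1 j
  have hfij := qFact_ne hq0 hq1 (i + j)
  have hq : (1:ℝ) - q ≠ 0 := by linarith
  have gi := qIntN_ne hq0 hq1 (k := i + 1) (by omega)
  have gij := qIntN_ne hq0 hq1 (k := i + j + 1) (by omega)
  field_simp

lemma sumB (β : ℝ) (m : ℕ) :
    ∑ k ∈ range (m + 1), qInt q (k : ℤ) * qBinom q m k * β ^ k * ominus q β (m - k)
      = qInt q (m : ℤ) * β := by
  cases m with
  | zero => simp [qInt]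
  | succ m =>
    rw [Finset.sum_range_succ']
    have h0 : qInt q ((0:ℕ) : ℤ) = 0 := by simp [qInt]
    rw [h0]
    simp only [zero_mul, add_zero]
    have hterm : ∀ i ∈ range (m + 1),
        qInt q ((i + 1 : ℕ) : ℤ) * qBinom q (m + 1) (i + 1) * β ^ (i + 1)
            * ominus q β (m + 1 - (i + 1))
          = (qInt q ((m + 1 : ℕ) : ℤ) * β) * (qBinom q m i * β ^ i * ominus q β (m - i)) := by
      intro i hi
      rw [mem_range] at hi
      obtain ⟨j, rfl⟩ : ∃ j, m = i + j := ⟨m - i, by omega⟩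
      have ha := absorb hq0 hq1 i j
      have e1 : ((i + 1 : ℕ) : ℤ) = (i : ℤ) + 1 := by push_cast; ring
      have e2 : ((i + j + 1 : ℕ) : ℤ) = (i : ℤ) + (j : ℤ) + 1 := by push_cast; ring
      have e3 : i + j + 1 - (i + 1) = j := by omega
      have e4 : i + j - i = j := by omega
      rw [e1, e2, e3, e4, ha]
      ring
    rw [Finset.sum_congr rfl hterm, ← Finset.mul_sum, sumA hq0 hq1 β m, mul_one]


lemma absorb2 (i j : ℕ) :
    qInt q ((j : ℤ) + 1) * qBinom q (i + j + 1) i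
      = qInt q ((i : ℤ) + (j : ℤ) + 1) * qBinom q (i + j) i := by
  have h1 : i + j + 1 - i = j + 1 := by omega
  have h2 : i + j - i = j := by omega
  unfold qBinom
  rw [h1, h2, show i + j + 1 = (i + j) + 1 by rfl, qFact_succ, qFact_succ j]
  have e1 : qInt q ((j:ℤ) + 1) = (1 - q ^ (j+1)) / (1 - q) := by
    rw [show (j:ℤ) + 1 = ((j+1 : ℕ) : ℤ) by push_cast; ring, qIntN]
  have e2 : qInt q ((i:ℤ) + (j:ℤ) + 1) = (1 - q ^ (i+j+1)) / (1 - q) := by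
    rw [show (i:ℤ) + (j:ℤ) + 1 = ((i+j+1 : ℕ) : ℤ) by push_cast; ring, qIntN]
  rw [e1, e2]
  have hfi := qFact_ne hq0 hq1 i
  have hfj := qFact_ne hq0 hq1 j
  have hfij := qFact_ne hq0 hq1 (i + j)
  have hq : (1:ℝ) - q ≠ 0 := by linarith
  have gj := qIntN_ne hq0 hq1 (k := j + 1) (by omega)
  have gij := qIntN_ne hq0 hq1 (k := i + j + 1) (by omega)
  field_simp

end

section
variable {q : ℝ} (hq0 : 0 < q) (hq1 : q < 1)
include hq0 hq1

lemma qTri_eq (n x1 x2 : ℕ) :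
    qTri q n x1 x2 = qBinom q n x1 * qBinom q (n - x1) x2 := by
  unfold qTri qBinom
  have h1 := qFact_ne hq0 hq1 x1
  have h2 := qFact_ne hq0 hq1 x2
  have h3 := qFact_ne hq0 hq1 (n - x1)
  have h4 := qFact_ne hq0 hq1 (n - x1 - x2)
  field_simp

lemma Ekey (b1 b2 : ℝ) (hb1 : 0 < b1) (hb1' : b1 < 1) (n : ℕ) (hn : 1 ≤ n) (g : ℕ → ℝ) :
    ∑ x2 ∈ Icc 1 n, ∑ x1 ∈ range (n - x2 + 1),
        g x1 * qInt q (x2 : ℤ) * upmf q b1 b2 n x1 x2 / (1 - b1 * q ^ (n - 1 - x1))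
      = qInt q (n : ℤ) * b2 *
          ∑ x1 ∈ range n, g x1 * qBinom q (n - 1) x1 * b1 ^ x1 * ominus q b1 (n - 1 - x1) := by
  rw [Finset.sum_comm' (s := Icc 1 n) (t := fun x2 => range (n - x2 + 1)) (t' := range n)
    (s' := fun x1 => Icc 1 (n - x1))
    (by intro x2 x1; simp only [mem_Icc, mem_range]; omega)]
  rw [Finset.mul_sum]
  refine Finset.sum_congr rfl fun x1 hx1 => ?_
  rw [mem_range] at hx1
  obtain ⟨j, rfl⟩ : ∃ j, n = x1 + j + 1 := ⟨n - x1 - 1, by omega⟩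
  have e1 : x1 + j + 1 - x1 = j + 1 := by omega
  have e2 : x1 + j + 1 - 1 - x1 = j := by omega
  have hden : (1 : ℝ) - b1 * q ^ j ≠ 0 := by
    have hp : q ^ j ≤ 1 := pow_le_one₀ hq0.le hq1.le
    nlinarith
  have hterm : ∀ x2 ∈ Icc 1 (x1 + j + 1 - x1),
      g x1 * qInt q (x2 : ℤ) * upmf q b1 b2 (x1 + j + 1) x1 x2
          / (1 - b1 * q ^ (x1 + j + 1 - 1 - x1))
        = (g x1 * qBinom q (x1 + j + 1) x1 * b1 ^ x1 * ominus q b1 j) *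
            (qInt q (x2 : ℤ) * qBinom q (j + 1) x2 * b2 ^ x2 * ominus q b2 (j + 1 - x2)) := by
    intro x2 _
    unfold upmf
    rw [qTri_eq hq0 hq1, e1, e2, ominus_succ, div_eq_iff hden]
    ring
  rw [Finset.sum_congr rfl hterm, ← Finset.mul_sum]
  have hext : ∑ x2 ∈ Icc 1 (x1 + j + 1 - x1),
      qInt q (x2 : ℤ) * qBinom q (j + 1) x2 * b2 ^ x2 * ominus q b2 (j + 1 - x2)
      = ∑ x2 ∈ range (j + 1 + 1),
          qInt q (x2 : ℤ) * qBinom q (j + 1) x2 * b2 ^ x2 * ominus q b2 (j + 1 - x2) := by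
    refine Finset.sum_subset (fun x hx => ?_) (fun x hx hx' => ?_)
    · rw [mem_Icc] at hx; rw [mem_range]; omega
    · rw [mem_range] at hx; rw [mem_Icc] at hx'
      have : x = 0 := by omega
      subst this
      simp [qInt]
  rw [hext, sumB hq0 hq1 b2 (j + 1)]
  have habs := absorb2 hq0 hq1 x1 j
  have c1 : ((j + 1 : ℕ) : ℤ) = (j : ℤ) + 1 := by push_cast; ring
  have c2 : ((x1 + j + 1 : ℕ) : ℤ) = (x1 : ℤ) + (j : ℤ) + 1 := by push_cast; ring
  have c3 : x1 + j + 1 - 1 = x1 + j := by omega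
  rw [c1, c2, c3]
  calc g x1 * qBinom q (x1 + j + 1) x1 * b1 ^ x1 * ominus q b1 j * (qInt q ((j:ℤ) + 1) * b2)
      = (qInt q ((j:ℤ) + 1) * qBinom q (x1 + j + 1) x1) * (g x1 * b1 ^ x1 * ominus q b1 j * b2) := by
        ring
    _ = (qInt q ((x1:ℤ) + (j:ℤ) + 1) * qBinom q (x1 + j) x1) * (g x1 * b1 ^ x1 * ominus q b1 j * b2) := by
        rw [habs]
    _ = _ := by
        have e3 : x1 + j - x1 = j := by omega
        rw [e3]
        ring

end

theorem stmt14 (q : ℝ) (hq0 : 0 < q) (hq1 : q < 1) (n : ℕ) (hn : 1 ≤ n) (β1 β2 : ℝ)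
    (hβ1 : 0 < β1) (hβ1' : β1 < 1) (hβ2 : 0 < β2) (hβ2' : β2 < 1) :
    (∑ x2 ∈ Finset.Icc 1 n, ∑ x1 ∈ Finset.range (n - x2 + 1),
        qInt q (x1 : ℤ) * qInt q (x2 : ℤ) * upmf q β1 β2 n x1 x2 /
          (1 - β1 * q ^ (n - 1 - x1)))
    - (∑ x1 ∈ Finset.range (n + 1), ∑ x2 ∈ Finset.range (n - x1 + 1),
        qInt q (x1 : ℤ) * upmf q β1 β2 n x1 x2)
      * (∑ x2 ∈ Finset.Icc 1 n, ∑ x1 ∈ Finset.range (n - x2 + 1),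
        qInt q (x2 : ℤ) * upmf q β1 β2 n x1 x2 / (1 - β1 * q ^ (n - 1 - x1)))
      = qInt q (n : ℤ) * β1 * β2 * (qInt q ((n : ℤ) - 1) - qInt q (n : ℤ)) := by
  have hrange : n - 1 + 1 = n := by omega
  -- E1
  have hE1 : (∑ x1 ∈ Finset.range (n + 1), ∑ x2 ∈ Finset.range (n - x1 + 1),
      qInt q (x1 : ℤ) * upmf q β1 β2 n x1 x2) = qInt q (n : ℤ) * β1 := by
    have hinner : ∀ x1 ∈ Finset.range (n + 1),
        (∑ x2 ∈ Finset.range (n - x1 + 1), qInt q (x1 : ℤ) * upmf q β1 β2 n x1 x2)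
          = qInt q (x1 : ℤ) * qBinom q n x1 * β1 ^ x1 * ominus q β1 (n - x1) := by
      intro x1 _
      calc ∑ x2 ∈ Finset.range (n - x1 + 1), qInt q (x1 : ℤ) * upmf q β1 β2 n x1 x2
          = ∑ x2 ∈ Finset.range (n - x1 + 1),
              (qInt q (x1 : ℤ) * qBinom q n x1 * β1 ^ x1 * ominus q β1 (n - x1)) *
                (qBinom q (n - x1) x2 * β2 ^ x2 * ominus q β2 (n - x1 - x2)) := by
            refine Finset.sum_congr rfl fun x2 _ => ?_
            unfold upmf
            rw [qTri_eq hq0 hq1]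
            ring
        _ = (qInt q (x1 : ℤ) * qBinom q n x1 * β1 ^ x1 * ominus q β1 (n - x1)) *
              ∑ x2 ∈ Finset.range (n - x1 + 1),
                qBinom q (n - x1) x2 * β2 ^ x2 * ominus q β2 (n - x1 - x2) := by
            rw [Finset.mul_sum]
        _ = _ := by rw [sumA hq0 hq1 β2 (n - x1), mul_one]
    rw [Finset.sum_congr rfl hinner, sumB hq0 hq1 β1 n]
  -- E2
  have hE2 : (∑ x2 ∈ Finset.Icc 1 n, ∑ x1 ∈ Finset.range (n - x2 + 1),
      qInt q (x2 : ℤ) * upmf q β1 β2 n x1 x2 / (1 - β1 * q ^ (n - 1 - x1)))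
      = qInt q (n : ℤ) * β2 := by
    have h := Ekey hq0 hq1 β1 β2 hβ1 hβ1' n hn (fun _ => 1)
    simp only [one_mul] at h
    rw [h]
    have := sumA hq0 hq1 β1 (n - 1)
    rw [hrange] at this
    rw [this, mul_one]
  -- E12
  have hE12 : (∑ x2 ∈ Finset.Icc 1 n, ∑ x1 ∈ Finset.range (n - x2 + 1),
      qInt q (x1 : ℤ) * qInt q (x2 : ℤ) * upmf q β1 β2 n x1 x2 / (1 - β1 * q ^ (n - 1 - x1)))
      = qInt q (n : ℤ) * β2 * (qInt q ((n - 1 : ℕ) : ℤ) * β1) := by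
    have h := Ekey hq0 hq1 β1 β2 hβ1 hβ1' n hn (fun x1 => qInt q (x1 : ℤ))
    rw [h]
    have := sumB hq0 hq1 β1 (n - 1)
    rw [hrange] at this
    rw [this]
  rw [hE1, hE2, hE12]
  have hc : ((n - 1 : ℕ) : ℤ) = (n : ℤ) - 1 := by omega
  rw [hc]
  ring
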